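/- Let N ≥ 1, let E = S^N ⊂ ℝ^{N+1} be the unit Euclidean sphere, and let X = E^ℕ with metric d(x,y) = Σ_{n=1}^∞ 2^{-n} min(|x_n − y_n|, 1), where |·| is the Euclidean distance in ℝ^{N+1}. Fix δ > 0 and define the Dyson-type potential f(x) = Σ_{n=1}^∞ ⟨x_1, x_{n+1}⟩ / n^{2+δ}, where ⟨·,·⟩ is the Euclidean inner product. Then the series converges absolutely for every x ∈ X, f is bounded and continuous, and for every ε with 0 < ε ≤ 1 + δ and every r_0 > e there exists C > 0 such that |f(x) − f(y)| ≤ C (log(r_0/d(x,y)))^{-ε} for all x ≠ y in X; that is, f belongs to the generalized Hölder space C^{ε log}(X, ℝ). -/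

import Mathlib

set_option maxHeartbeats 1000000

open MeasureTheory
open scoped RealInnerProductSpace

open Finset in
lemma aux_bernoulli (p : ℝ) (hp : 1 ≤ p) (a : ℝ) (ha : 1 ≤ a) :
    p * (a + 1) ^ (-(p + 1)) ≤ a ^ (-p) - (a + 1) ^ (-p) := by
  have ha0 : 0 < a := lt_of_lt_of_le one_pos ha
  have ha1 : 0 < a + 1 := by linarith
  have hB : 1 + p * (1 / a) ≤ (1 + 1 / a) ^ p :=
    one_add_mul_self_le_rpow_one_add (by
      have := (one_div_pos.mpr ha0).le; linarith) hp
  have hrw : a ^ (-p) = (a + 1) ^ (-p) * (1 + 1 / a) ^ p := by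
    rw [Real.rpow_neg ha0.le, Real.rpow_neg ha1.le]
    have : (1 + 1 / a) = (a + 1) / a := by field_simp
    rw [this, Real.div_rpow ha1.le ha0.le]
    have hap : 0 < a ^ p := Real.rpow_pos_of_pos ha0 p
    have hap1 : 0 < (a + 1) ^ p := Real.rpow_pos_of_pos ha1 p
    field_simp
  have h2 : (a + 1) ^ (-p) * (p / a) ≤ a ^ (-p) - (a + 1) ^ (-p) := by
    rw [hrw]
    have hpos : 0 ≤ (a + 1) ^ (-p) := (Real.rpow_pos_of_pos ha1 _).le
    have hmul := mul_le_mul_of_nonneg_left hB hpos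
    have hpa : p / a = p * (1 / a) := by ring
    rw [hpa]
    nlinarith [hmul]
  refine le_trans ?_ h2
  have : (a + 1) ^ (-(p + 1)) = (a + 1) ^ (-p) * (a + 1)⁻¹ := by
    rw [← Real.rpow_neg_one (a + 1), ← Real.rpow_add ha1]; ring_nf
  rw [this]
  have hple : p / (a + 1) ≤ p / a := by
    apply div_le_div_of_nonneg_left (by linarith) ha0 (by linarith)
  have hpos : 0 ≤ (a + 1) ^ (-p) := (Real.rpow_pos_of_pos ha1 _).le
  calc p * ((a + 1) ^ (-p) * (a + 1)⁻¹) = (a + 1) ^ (-p) * (p / (a + 1)) := by ring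
    _ ≤ (a + 1) ^ (-p) * (p / a) := by exact mul_le_mul_of_nonneg_left hple hpos

open Finset in
lemma aux_tail (p : ℝ) (hp : 1 ≤ p) (K : ℕ) (hK : 1 ≤ K) (g : ℕ → ℝ)
    (h0 : ∀ n, 0 ≤ g n) (hle : ∀ n, g n ≤ 2 * ((n : ℝ) + K + 1) ^ (-(p + 1))) :
    ∑' n, g n ≤ (2 / p) * (K : ℝ) ^ (-p) := by
  have hp0 : 0 < p := lt_of_lt_of_le one_pos hp
  apply Real.tsum_le_of_sum_range_le h0
  intro M
  set F : ℕ → ℝ := fun i => ((i : ℝ) + K) ^ (-p) with hF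
  have key : ∀ n, g n ≤ (2 / p) * (F n - F (n + 1)) := by
    intro n
    have ha : (1 : ℝ) ≤ (n : ℝ) + K := by
      have h1 : (1 : ℝ) ≤ (K : ℝ) := by exact_mod_cast hK
      have h2 : (0:ℝ) ≤ (n:ℝ) := Nat.cast_nonneg n
      linarith
    have hb := aux_bernoulli p hp ((n : ℝ) + K) ha
    have hFdef : F n = ((n : ℝ) + K) ^ (-p) := rfl
    have hFdef1 : F (n + 1) = ((n : ℝ) + K + 1) ^ (-p) := by
      simp only [hF]; push_cast; ring_nf
    rw [hFdef, hFdef1]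
    calc g n ≤ 2 * ((n : ℝ) + K + 1) ^ (-(p + 1)) := hle n
      _ = (2 / p) * (p * (((n : ℝ) + K) + 1) ^ (-(p + 1))) := by field_simp
      _ ≤ (2 / p) * (((n : ℝ) + K) ^ (-p) - (((n : ℝ) + K) + 1) ^ (-p)) := by
          apply mul_le_mul_of_nonneg_left hb (by positivity)
  calc ∑ i ∈ range M, g i ≤ ∑ i ∈ range M, (2 / p) * (F i - F (i + 1)) :=
        Finset.sum_le_sum fun i _ => key i
    _ = (2 / p) * (F 0 - F M) := by rw [← Finset.mul_sum, Finset.sum_range_sub' F M]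
    _ ≤ (2 / p) * F 0 := by
        have : 0 ≤ F M := (Real.rpow_pos_of_pos (by positivity) _).le
        nlinarith [div_nonneg (by norm_num : (0:ℝ) ≤ 2) hp0.le]
    _ = (2 / p) * (K : ℝ) ^ (-p) := by simp [hF]

/-- The metric `d(x,y) = Σ_{n≥1} 2⁻ⁿ min(d_E(x_n,y_n),1)` on the shift space. -/
noncomputable def seqDist {E : Type*} [PseudoMetricSpace E] (x y : ℕ → E) : ℝ :=
  ∑' n : ℕ, (1 / 2 : ℝ) ^ (n + 1) * min (dist (x n) (y n)) 1

lemma stmt_12_general {H : Type*} [NormedAddCommGroup H] [InnerProductSpace ℝ H]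
    (δ : ℝ) (hδ : 0 < δ)
    (f : (ℕ → Metric.sphere (0 : H) 1) → ℝ)
    (hf : ∀ x, f x = ∑' n : ℕ,
      ⟪((x 0 : H)), ((x (n + 1) : H))⟫
        / ((n : ℝ) + 1) ^ ((2 : ℝ) + δ)) :
    (∀ x : ℕ → Metric.sphere (0 : H) 1, Summable fun n : ℕ =>
      |⟪((x 0 : H)), ((x (n + 1) : H))⟫|
        / ((n : ℝ) + 1) ^ ((2 : ℝ) + δ)) ∧
    (∃ M, ∀ x, |f x| ≤ M) ∧
    Continuous f ∧
    (∀ ε : ℝ, 0 < ε → ε ≤ 1 + δ → ∀ r0 : ℝ, Real.exp 1 < r0 →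
      ∃ C > (0 : ℝ), ∀ x y, x ≠ y →
        |f x - f y| ≤ C * (Real.log (r0 / seqDist x y)) ^ (-ε)) := by
  -- basic norms
  have hnorm : ∀ u : Metric.sphere (0 : H) 1, ‖(u : H)‖ = 1 := by
    intro u
    have := u.2
    rwa [mem_sphere_zero_iff_norm] at this
  have hinner : ∀ u v : Metric.sphere (0 : H) 1, |⟪(u : H), (v : H)⟫| ≤ 1 := by
    intro u v
    calc |⟪(u : H), (v : H)⟫| ≤ ‖(u : H)‖ * ‖(v : H)‖ := abs_real_inner_le_norm _ _
      _ = 1 := by rw [hnorm, hnorm, mul_one]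
  have hpow1 : ∀ n : ℕ, (1:ℝ) ≤ ((n:ℝ)+1) ^ ((2:ℝ)+δ) := fun n =>
    Real.one_le_rpow (by have := Nat.cast_nonneg (α := ℝ) n; linarith) (by linarith)
  have hpow0 : ∀ n : ℕ, (0:ℝ) < ((n:ℝ)+1) ^ ((2:ℝ)+δ) := fun n =>
    lt_of_lt_of_le one_pos (hpow1 n)
  -- base summable series
  have hbase : Summable (fun n : ℕ => 1 / ((n:ℝ)+1) ^ ((2:ℝ)+δ)) := by
    have h1 := Real.summable_one_div_nat_rpow.mpr (show (1:ℝ) < 2+δ by linarith)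
    have h2 := (summable_nat_add_iff 1).mpr h1
    apply h2.congr
    intro n
    push_cast
    ring_nf
  -- the summands
  set t : ℕ → (ℕ → Metric.sphere (0 : H) 1) → ℝ := fun n x =>
    ⟪((x 0 : H)), ((x (n + 1) : H))⟫ / ((n : ℝ) + 1) ^ ((2 : ℝ) + δ) with ht
  have htabs : ∀ n x, |t n x| = |⟪((x 0 : H)), ((x (n + 1) : H))⟫| / ((n : ℝ) + 1) ^ ((2 : ℝ) + δ) := by
    intro n x
    rw [ht]
    simp only []
    rw [abs_div, abs_of_pos (hpow0 n)]
  have htle : ∀ n x, |t n x| ≤ 1 / ((n:ℝ)+1) ^ ((2:ℝ)+δ) := by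
    intro n x
    rw [htabs]
    exact (div_le_div_iff_of_pos_right (hpow0 n)).mpr (hinner _ _)
  have hsumabs : ∀ x, Summable (fun n => |t n x|) := by
    intro x
    apply Summable.of_nonneg_of_le (fun n => abs_nonneg _) (fun n => htle n x) hbase
  have hsumt : ∀ x, Summable (fun n => t n x) := fun x => (hsumabs x).of_abs
  -- Part 1
  have part1 : ∀ x : ℕ → Metric.sphere (0 : H) 1, Summable fun n : ℕ =>
      |⟪((x 0 : H)), ((x (n + 1) : H))⟫| / ((n : ℝ) + 1) ^ ((2 : ℝ) + δ) := by
    intro x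
    exact (hsumabs x).congr (fun n => htabs n x)
  refine ⟨part1, ?_, ?_, ?_⟩
  · -- boundedness
    refine ⟨∑' n : ℕ, 1 / ((n:ℝ)+1) ^ ((2:ℝ)+δ), fun x => ?_⟩
    rw [hf x]
    have h1 : |∑' n, t n x| ≤ ∑' n, |t n x| := by
      simpa [Real.norm_eq_abs] using norm_tsum_le_tsum_norm (f := fun n => t n x)
        (by simpa [Real.norm_eq_abs] using hsumabs x)
    exact h1.trans (Summable.tsum_le_tsum (fun n => htle n x) (hsumabs x) hbase)
  · -- continuity
    have hfeq : f = fun x => ∑' n, t n x := funext hf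
    rw [hfeq]
    apply continuous_tsum ?_ hbase
    · intro n x
      simpa [Real.norm_eq_abs] using htle n x
    · intro n
      apply Continuous.div_const
      exact Continuous.inner
        (continuous_subtype_val.comp (continuous_apply 0))
        (continuous_subtype_val.comp (continuous_apply (n+1)))
  · -- the log-Hölder estimate
    intro ε hε hεδ r0 hr0
    have hr0pos : 0 < r0 := lt_trans (Real.exp_pos 1) hr0
    set p : ℝ := 1 + δ with hpdef
    have hp1 : 1 ≤ p := by rw [hpdef]; linarith
    have hp0 : 0 < p := lt_of_lt_of_le one_pos hp1
    set m : ℕ := max 1 ⌈ε⌉₊ with hmdef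
    have hm1 : 1 ≤ m := le_max_left _ _
    have hmε : ε ≤ (m : ℝ) := le_trans (Nat.le_ceil ε) (by exact_mod_cast le_max_right 1 ⌈ε⌉₊)
    have hmR : (1:ℝ) ≤ (m:ℝ) := by exact_mod_cast hm1
    set C : ℝ := 32 * r0 * (2 * (m:ℝ)) ^ m + (2 / p) * (2:ℝ) ^ p with hCdef
    have hCpos : 0 < C := by
      have h1 : (0:ℝ) < (2 * (m:ℝ)) ^ m := pow_pos (by linarith) m
      have h2 : (0:ℝ) < (2:ℝ) ^ p := Real.rpow_pos_of_pos two_pos p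
      have h3 : 0 < (2 / p) * (2:ℝ) ^ p := mul_pos (by positivity) h2
      rw [hCdef]
      nlinarith
    refine ⟨C, hCpos, fun x y hxy => ?_⟩
    set d : ℝ := seqDist x y with hd
    -- basic facts about d
    have hterm_nonneg : ∀ n : ℕ, 0 ≤ (1/2:ℝ)^(n+1) * min (dist (x n) (y n)) 1 := by
      intro n
      apply mul_nonneg (by positivity)
      exact le_min dist_nonneg one_pos.le
    have hgeom : Summable (fun n : ℕ => (1/2:ℝ)^(n+1)) := by
      simpa [pow_succ, mul_comm] using
        (summable_geometric_of_lt_one (by norm_num : (0:ℝ) ≤ 1/2) (by norm_num)).mul_left (1/2:ℝ)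
    have hgeomsum : ∑' (n:ℕ), (1/2:ℝ)^(n+1) = 1 := by
      have h := tsum_geometric_of_lt_one (by norm_num : (0:ℝ) ≤ 1/2) (by norm_num)
      calc ∑' (n:ℕ), (1/2:ℝ)^(n+1) = ∑' (n:ℕ), (1/2:ℝ)*(1/2)^n := by
            apply tsum_congr; intro n; rw [pow_succ]; ring
        _ = (1/2)*∑' (n:ℕ), (1/2:ℝ)^n := tsum_mul_left
        _ = 1 := by rw [h]; norm_num
    have hsumd : Summable (fun n : ℕ => (1/2:ℝ)^(n+1) * min (dist (x n) (y n)) 1) := by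
      apply Summable.of_nonneg_of_le hterm_nonneg ?_ hgeom
      intro n
      calc (1/2:ℝ)^(n+1) * min (dist (x n) (y n)) 1 ≤ (1/2:ℝ)^(n+1) * 1 :=
            mul_le_mul_of_nonneg_left (min_le_right _ _) (by positivity)
        _ = (1/2:ℝ)^(n+1) := mul_one _
    have hdpos : 0 < d := by
      simp only [hd, seqDist]
      obtain ⟨n0, hn0⟩ := Function.ne_iff.mp hxy
      apply Summable.tsum_pos hsumd hterm_nonneg n0
      apply mul_pos (by positivity)
      exact lt_min (dist_pos.mpr hn0) one_pos
    have hdone : d ≤ 1 := by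
      simp only [hd, seqDist]
      calc ∑' (n:ℕ), (1/2:ℝ)^(n+1) * min (dist (x n) (y n)) 1
          ≤ ∑' (n:ℕ), (1/2:ℝ)^(n+1) := by
            apply Summable.tsum_le_tsum ?_ hsumd hgeom
            intro n
            calc (1/2:ℝ)^(n+1) * min (dist (x n) (y n)) 1 ≤ (1/2:ℝ)^(n+1) * 1 :=
                  mul_le_mul_of_nonneg_left (min_le_right _ _) (by positivity)
              _ = (1/2:ℝ)^(n+1) := mul_one _
        _ = 1 := hgeomsum
    have hcoord : ∀ n : ℕ, min (dist (x n) (y n)) 1 ≤ 2^(n+1) * d := by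
      intro n
      have hle := Summable.le_tsum hsumd n (fun m _ => hterm_nonneg m)
      have h2 : ((1:ℝ)/2)^(n+1) * (2:ℝ)^(n+1) = 1 := by
        rw [← mul_pow]; norm_num
      calc min (dist (x n) (y n)) 1
          = (2:ℝ)^(n+1) * ((1/2:ℝ)^(n+1) * min (dist (x n) (y n)) 1) := by
            rw [← mul_assoc, mul_comm ((2:ℝ)^(n+1)), h2, one_mul]
        _ ≤ (2:ℝ)^(n+1) * d := by
            apply mul_le_mul_of_nonneg_left ?_ (by positivity)
            simp only [hd, seqDist]
            exact hle
    have hdist2 : ∀ n : ℕ, dist (x n) (y n) ≤ 2 := by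
      intro n
      rw [Subtype.dist_eq, dist_eq_norm]
      calc ‖(x n : H) - (y n : H)‖ ≤ ‖(x n : H)‖ + ‖(y n : H)‖ := norm_sub_le _ _
        _ = 2 := by rw [hnorm, hnorm]; norm_num
    have hdistle : ∀ n : ℕ, dist (x n) (y n) ≤ 2^(n+2) * d := by
      intro n
      rcases le_or_gt (dist (x n) (y n)) 1 with h | h
      · have := hcoord n
        rw [min_eq_left h] at this
        calc dist (x n) (y n) ≤ 2^(n+1) * d := this
          _ ≤ 2^(n+2) * d := by
              apply mul_le_mul_of_nonneg_right ?_ hdpos.le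
              apply pow_le_pow_right₀ (by norm_num)
              omega
      · have h1 : (1:ℝ) ≤ 2^(n+1) * d := by
          have := hcoord n
          rwa [min_eq_right h.le] at this
        calc dist (x n) (y n) ≤ 2 := hdist2 n
          _ = 2 * 1 := by norm_num
          _ ≤ 2 * (2^(n+1) * d) := by nlinarith
          _ = 2^(n+2) * d := by ring
    -- difference of the summands
    set D : ℕ → ℝ := fun n => |t n x - t n y| with hD
    have hDhead : ∀ n : ℕ, D n ≤ 2^(n+4) * d := by
      intro n
      have hip : |⟪((x 0 : H)), ((x (n+1) : H))⟫ - ⟪((y 0 : H)), ((y (n+1) : H))⟫|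
          ≤ dist (x 0) (y 0) + dist (x (n+1)) (y (n+1)) := by
        have hsplit : ⟪((x 0 : H)), ((x (n+1) : H))⟫ - ⟪((y 0 : H)), ((y (n+1) : H))⟫
            = ⟪((x 0 : H)) - ((y 0 : H)), ((x (n+1) : H))⟫
              + ⟪((y 0 : H)), ((x (n+1) : H)) - ((y (n+1) : H))⟫ := by
          rw [inner_sub_left, inner_sub_right]; ring
        rw [hsplit]
        calc |⟪((x 0 : H)) - ((y 0 : H)), ((x (n+1) : H))⟫
              + ⟪((y 0 : H)), ((x (n+1) : H)) - ((y (n+1) : H))⟫|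
            ≤ |⟪((x 0 : H)) - ((y 0 : H)), ((x (n+1) : H))⟫|
              + |⟪((y 0 : H)), ((x (n+1) : H)) - ((y (n+1) : H))⟫| := abs_add_le _ _
          _ ≤ ‖(x 0 : H) - (y 0 : H)‖ * ‖(x (n+1) : H)‖
              + ‖(y 0 : H)‖ * ‖(x (n+1) : H) - (y (n+1) : H)‖ := by
              gcongr <;> exact abs_real_inner_le_norm _ _
          _ = dist (x 0) (y 0) + dist (x (n+1)) (y (n+1)) := by
              rw [hnorm, hnorm, Subtype.dist_eq, Subtype.dist_eq, dist_eq_norm, dist_eq_norm]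
              ring
      have hDn : D n = |⟪((x 0 : H)), ((x (n+1) : H))⟫ - ⟪((y 0 : H)), ((y (n+1) : H))⟫|
          / ((n : ℝ) + 1) ^ ((2 : ℝ) + δ) := by
        rw [hD]
        simp only [ht]
        rw [div_sub_div_same, abs_div, abs_of_pos (hpow0 n)]
      rw [hDn]
      calc |⟪((x 0 : H)), ((x (n+1) : H))⟫ - ⟪((y 0 : H)), ((y (n+1) : H))⟫|
            / ((n : ℝ) + 1) ^ ((2 : ℝ) + δ)
          ≤ |⟪((x 0 : H)), ((x (n+1) : H))⟫ - ⟪((y 0 : H)), ((y (n+1) : H))⟫| / 1 := by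
            apply div_le_div_of_nonneg_left (abs_nonneg _) one_pos (hpow1 n)
        _ = |⟪((x 0 : H)), ((x (n+1) : H))⟫ - ⟪((y 0 : H)), ((y (n+1) : H))⟫| := div_one _
        _ ≤ dist (x 0) (y 0) + dist (x (n+1)) (y (n+1)) := hip
        _ ≤ 2^(0+2) * d + 2^(n+3) * d := by
            have h1 := hdistle 0
            have h2 := hdistle (n+1)
            have : n + 1 + 2 = n + 3 := by omega
            rw [this] at h2
            linarith
        _ ≤ 2^(n+4) * d := by
            have h4 : (2:ℝ)^(0+2) + (2:ℝ)^(n+3) ≤ 2^(n+4) := by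
              have : (4:ℝ) ≤ 2^(n+3) := by
                calc (4:ℝ) ≤ 2^3 := by norm_num
                  _ ≤ 2^(n+3) := pow_le_pow_right₀ (by norm_num) (by omega)
              calc (2:ℝ)^(0+2) + (2:ℝ)^(n+3) = 4 + 2^(n+3) := by norm_num
                _ ≤ 2^(n+3) + 2^(n+3) := by linarith
                _ = 2^(n+4) := by ring
            nlinarith [hdpos.le]
    have hDtail : ∀ n : ℕ, D n ≤ 2 / ((n:ℝ)+1) ^ ((2:ℝ)+δ) := by
      intro n
      calc D n ≤ |t n x| + |t n y| := abs_sub _ _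
        _ ≤ 1 / ((n:ℝ)+1) ^ ((2:ℝ)+δ) + 1 / ((n:ℝ)+1) ^ ((2:ℝ)+δ) :=
            add_le_add (htle n x) (htle n y)
        _ = 2 / ((n:ℝ)+1) ^ ((2:ℝ)+δ) := by ring
    have hDnonneg : ∀ n, 0 ≤ D n := fun n => abs_nonneg _
    have hDsum : Summable D := by
      apply Summable.of_nonneg_of_le hDnonneg hDtail
      simpa [div_eq_mul_inv, mul_comm] using hbase.mul_left 2
    have hfd : |f x - f y| ≤ ∑' n, D n := by
      rw [hf x, hf y, ← Summable.tsum_sub (hsumt x) (hsumt y)]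
      simpa [Real.norm_eq_abs] using norm_tsum_le_tsum_norm (f := fun n => t n x - t n y)
        (by simpa [Real.norm_eq_abs] using hDsum)
    -- choose the cutoff
    set L : ℝ := Real.log (r0 / d) with hL
    have hr0d : r0 ≤ r0 / d := by
      rw [le_div_iff₀ hdpos]
      nlinarith
    have hL1 : 1 < L := by
      rw [hL]
      calc (1:ℝ) = Real.log (Real.exp 1) := (Real.log_exp 1).symm
        _ < Real.log r0 := by
            apply Real.log_lt_log (Real.exp_pos 1) hr0
        _ ≤ Real.log (r0 / d) := Real.log_le_log hr0pos hr0d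
    have hL0 : 0 < L := lt_trans one_pos hL1
    set K : ℕ := ⌈L/2⌉₊ with hK
    have hK1 : 1 ≤ K := by
      rw [hK]
      exact Nat.ceil_pos.mpr (by linarith)
    have hKL : L/2 ≤ (K:ℝ) := Nat.le_ceil _
    have hKU : (K:ℝ) ≤ L/2 + 1 := (Nat.ceil_lt_add_one (by linarith)).le
    have hdL : d = r0 * Real.exp (-L) := by
      have h1 : Real.exp L = r0 / d := Real.exp_log (by positivity)
      rw [Real.exp_neg, h1]
      field_simp
    -- split the sum
    have hsplit : ∑' n, D n = ∑ n ∈ Finset.range K, D n + ∑' n, D (n + K) :=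
      (Summable.sum_add_tsum_nat_add K hDsum).symm
    -- head estimate
    have hhead : ∑ n ∈ Finset.range K, D n ≤ 16 * d * 2^K := by
      calc ∑ n ∈ Finset.range K, D n ≤ ∑ n ∈ Finset.range K, 2^(n+4) * d :=
            Finset.sum_le_sum fun n _ => hDhead n
        _ = (∑ n ∈ Finset.range K, (2:ℝ)^n) * (16 * d) := by
            rw [Finset.sum_mul]
            apply Finset.sum_congr rfl
            intro n _
            ring
        _ = ((2:ℝ)^K - 1) / (2 - 1) * (16 * d) := by
            rw [geom_sum_eq (by norm_num : (2:ℝ) ≠ 1) K]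
        _ ≤ 16 * d * 2^K := by
            have h2 : (0:ℝ) < 2^K := by positivity
            nlinarith [hdpos.le]
    -- head in terms of L
    have hheadL : 16 * d * 2^K ≤ 32 * r0 * Real.exp (-(L/2)) := by
      have h2K : (2:ℝ)^K = Real.exp (K * Real.log 2) := by
        rw [Real.exp_nat_mul, Real.exp_log two_pos]
      have hlog2 : Real.log 2 < 1 := by
        calc Real.log 2 < Real.log (Real.exp 1) := by
              apply Real.log_lt_log two_pos
              have := Real.exp_one_gt_d9
              norm_num at this ⊢
              linarith
          _ = 1 := Real.log_exp 1
      have hlog2pos : 0 < Real.log 2 := Real.log_pos (by norm_num)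
      rw [hdL, h2K]
      have hexp : Real.exp (-L) * Real.exp ((K:ℝ) * Real.log 2)
          = Real.exp (-L + (K:ℝ) * Real.log 2) := (Real.exp_add _ _).symm
      have harg : -L + (K:ℝ) * Real.log 2 ≤ -(L/2) + Real.log 2 := by
        have : (K:ℝ) * Real.log 2 ≤ (L/2 + 1) * Real.log 2 :=
          mul_le_mul_of_nonneg_right hKU hlog2pos.le
        nlinarith [hL0.le]
      calc 16 * (r0 * Real.exp (-L)) * Real.exp ((K:ℝ) * Real.log 2)
          = 16 * r0 * Real.exp (-L + (K:ℝ) * Real.log 2) := by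
            rw [← hexp]; ring
        _ ≤ 16 * r0 * Real.exp (-(L/2) + Real.log 2) := by
            apply mul_le_mul_of_nonneg_left (Real.exp_le_exp.mpr harg) (by positivity)
        _ = 16 * r0 * (Real.exp (-(L/2)) * 2) := by
            rw [Real.exp_add, Real.exp_log two_pos]
        _ = 32 * r0 * Real.exp (-(L/2)) := by ring
    -- exp decay beats powers of L
    have hexpL : Real.exp (-(L/2)) ≤ (2*(m:ℝ))^m * L ^ (-ε) := by
      have hm0 : (0:ℝ) < (m:ℝ) := by linarith
      have h1 : L/(2*(m:ℝ)) + 1 ≤ Real.exp (L/(2*(m:ℝ))) := Real.add_one_le_exp _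
      have h2 : (L/(2*(m:ℝ)))^m ≤ Real.exp (L/2) := by
        calc (L/(2*(m:ℝ)))^m ≤ (Real.exp (L/(2*(m:ℝ))))^m := by
              apply pow_le_pow_left₀ (by positivity)
              linarith
          _ = Real.exp ((m:ℝ) * (L/(2*(m:ℝ)))) := (Real.exp_nat_mul _ m).symm
          _ = Real.exp (L/2) := by
              have hmne : ((m:ℕ):ℝ) ≠ 0 := ne_of_gt hm0
              congr 1
              field_simp
      have h3 : L^m / (2*(m:ℝ))^m ≤ Real.exp (L/2) := by
        rw [← div_pow]; exact h2
      have h4 : Real.exp (-(L/2)) ≤ (2*(m:ℝ))^m / L^m := by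
        have hq : (0:ℝ) < L^m/(2*(m:ℝ))^m := by positivity
        rw [Real.exp_neg]
        calc (Real.exp (L/2))⁻¹ ≤ (L^m/(2*(m:ℝ))^m)⁻¹ := by
              apply inv_anti₀ hq h3
          _ = (2*(m:ℝ))^m / L^m := by rw [inv_div]
      calc Real.exp (-(L/2)) ≤ (2*(m:ℝ))^m / L^m := h4
        _ = (2*(m:ℝ))^m * L ^ (-(m:ℝ)) := by
            rw [Real.rpow_neg hL0.le, ← Real.rpow_natCast L m]
            ring
        _ ≤ (2*(m:ℝ))^m * L ^ (-ε) := by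
            apply mul_le_mul_of_nonneg_left ?_ (by positivity)
            apply Real.rpow_le_rpow_of_exponent_le hL1.le
            linarith
    -- tail estimate
    have htail : ∑' n, D (n + K) ≤ (2/p) * (K:ℝ) ^ (-p) := by
      apply aux_tail p hp1 K hK1 _ (fun n => hDnonneg _)
      intro n
      have := hDtail (n + K)
      have hcast : (((n + K : ℕ) : ℝ) + 1) = (n:ℝ) + (K:ℝ) + 1 := by push_cast; ring
      have hrw : 2 / (((n + K : ℕ):ℝ)+1) ^ ((2:ℝ)+δ) = 2 * ((n:ℝ) + K + 1) ^ (-(p+1)) := by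
        rw [hcast, Real.rpow_neg (by positivity)]
        rw [div_eq_mul_inv]
        congr 2
        rw [hpdef]
        ring_nf
      rw [← hrw]
      exact this
    have htailL : (2/p) * (K:ℝ) ^ (-p) ≤ (2/p) * (2:ℝ)^p * L ^ (-ε) := by
      have hK2 : (K:ℝ) ^ (-p) ≤ (L/2) ^ (-p) :=
        Real.rpow_le_rpow_of_nonpos (by linarith) hKL (by linarith)
      have hL2 : (L/2) ^ (-p) = (2:ℝ)^p * L ^ (-p) := by
        rw [Real.div_rpow hL0.le (by norm_num : (0:ℝ) ≤ 2)]
        rw [Real.rpow_neg hL0.le, Real.rpow_neg (by norm_num : (0:ℝ) ≤ 2)]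
        rw [div_eq_mul_inv, inv_inv]
        ring
      have hLε : L ^ (-p) ≤ L ^ (-ε) := by
        apply Real.rpow_le_rpow_of_exponent_le hL1.le
        rw [hpdef]; linarith
      calc (2/p) * (K:ℝ) ^ (-p) ≤ (2/p) * (L/2) ^ (-p) := by
            apply mul_le_mul_of_nonneg_left hK2 (by positivity)
        _ = (2/p) * ((2:ℝ)^p * L ^ (-p)) := by rw [hL2]
        _ ≤ (2/p) * ((2:ℝ)^p * L ^ (-ε)) := by
            apply mul_le_mul_of_nonneg_left ?_ (by positivity)
            apply mul_le_mul_of_nonneg_left hLε (by positivity)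
        _ = (2/p) * (2:ℝ)^p * L ^ (-ε) := by ring
    -- put everything together
    have hLεpos : 0 < L ^ (-ε) := Real.rpow_pos_of_pos hL0 _
    calc |f x - f y| ≤ ∑' n, D n := hfd
      _ = ∑ n ∈ Finset.range K, D n + ∑' n, D (n + K) := hsplit
      _ ≤ 16 * d * 2^K + (2/p) * (K:ℝ) ^ (-p) := add_le_add hhead htail
      _ ≤ 32 * r0 * Real.exp (-(L/2)) + (2/p) * (2:ℝ)^p * L ^ (-ε) :=
          add_le_add hheadL htailL
      _ ≤ 32 * r0 * ((2*(m:ℝ))^m * L ^ (-ε)) + (2/p) * (2:ℝ)^p * L ^ (-ε) := by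
          apply add_le_add_left
          apply mul_le_mul_of_nonneg_left hexpL (by positivity)
      _ = C * L ^ (-ε) := by rw [hCdef]; ring

/-- The Dyson-type potential of the long-range `O(N)` model is well defined,
bounded, continuous and belongs to every generalized Hölder space
`C^{ε log}` with `0 < ε ≤ 1 + δ`. -/
theorem stmt_12
    (N : ℕ) (hN : 1 ≤ N) (δ : ℝ) (hδ : 0 < δ)
    (f : (ℕ → Metric.sphere (0 : EuclideanSpace ℝ (Fin (N + 1))) 1) → ℝ)
    (hf : ∀ x, f x = ∑' n : ℕ,
      ⟪((x 0 : EuclideanSpace ℝ (Fin (N + 1)))), ((x (n + 1) : EuclideanSpace ℝ (Fin (N + 1))))⟫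
        / ((n : ℝ) + 1) ^ ((2 : ℝ) + δ)) :
    (∀ x : ℕ → Metric.sphere (0 : EuclideanSpace ℝ (Fin (N + 1))) 1, Summable fun n : ℕ =>
      |⟪((x 0 : EuclideanSpace ℝ (Fin (N + 1)))), ((x (n + 1) : EuclideanSpace ℝ (Fin (N + 1))))⟫|
        / ((n : ℝ) + 1) ^ ((2 : ℝ) + δ)) ∧
    (∃ M, ∀ x, |f x| ≤ M) ∧
    Continuous f ∧
    (∀ ε : ℝ, 0 < ε → ε ≤ 1 + δ → ∀ r0 : ℝ, Real.exp 1 < r0 →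
      ∃ C > (0 : ℝ), ∀ x y, x ≠ y →
        |f x - f y| ≤ C * (Real.log (r0 / seqDist x y)) ^ (-ε)) :=
  stmt_12_general δ hδ f hf
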